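/- Let L = {i_1 < i_2 < … < i_ν} ⊆ {2, …, k} and let S_L = { q ∈ C^k(m) : for every 2 ≤ i ≤ k, A_{i−1}(q) = 0 if and only if i ∈ L }. Then the subset U of S_L consisting of those q = (x_0, …, x_k) such that ⟨x_{i_λ+1} − x_{i_λ}, x_{i_λ} − x_{i_λ−2}⟩ ≠ 0 for every λ with i_λ + 1 ≤ k and i_λ + 1 ∉ L, is open and dense in S_L (with the subspace topology). (This expresses that the RVT class with no tangency letters, C_{R^{h_0} V R^{h_1} ⋯ V R^{h_ν}}, is an open dense subset of the EKR class Σ_{j_1⋯j_k} of depth 1 determined by L.) -/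

import Mathlib

noncomputable section

open scoped RealInnerProductSpace

open Fin.NatCast

namespace ArticulatedArm

/-- `ℝ^{m+1}` with the Euclidean structure. -/
abbrev Vec (m : ℕ) : Type := EuclideanSpace ℝ (Fin (m + 1))

/-- `(ℝ^{m+1})^{k+1}` with the Euclidean (product) structure. -/
abbrev Tup (m k : ℕ) : Type := PiLp 2 (fun _ : Fin (k + 1) => Vec m)

/-- The segment vector `x_{i+1} - x_i`. -/
def seg (m k : ℕ) (x : Tup m k) (i : ℕ) : Vec m :=
  x ((i + 1 : ℕ) : Fin (k + 1)) - x ((i : ℕ) : Fin (k + 1))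

/-- The configuration space `C^k(m)`. -/
def Conf (m k : ℕ) : Set (Tup m k) := {x | ∀ i, i < k → ‖seg m k x i‖ = 1}

/-- `A_{i,j}(x) = ⟨x_{i+1} - x_i, x_{j+1} - x_j⟩`. -/
def AA (m k : ℕ) (x : Tup m k) (i j : ℕ) : ℝ := ⟪seg m k x i, seg m k x j⟫

/-- `A_i(x) = A_{i,i-1}(x)`. -/
def Acoef (m k : ℕ) (x : Tup m k) (i : ℕ) : ℝ := AA m k x i (i - 1)

/-- `Z_i(x)`: the tuple whose `i`-th component is `x_{i+1} - x_i` and the others `0`. -/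
def Zt (m k : ℕ) (x : Tup m k) (i : ℕ) : Tup m k :=
  WithLp.toLp 2 fun l => if (l : ℕ) = i then seg m k x i else 0

/-- `N_i(x)`: the tuple with `i`-th component `-(x_{i+1} - x_i)`, `(i+1)`-th component
`x_{i+1} - x_i`, and the others `0`. -/
def Nt (m k : ℕ) (x : Tup m k) (i : ℕ) : Tup m k :=
  WithLp.toLp 2 fun l => if (l : ℕ) = i then -(seg m k x i)
    else if (l : ℕ) = i + 1 then seg m k x i else 0

/-- `Y_n(x) = Σ_{i=0}^{n-1} (Π_{j=i+1}^{n-1} A_j(x)) Z_i(x)`. -/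
def Yt (m k : ℕ) (x : Tup m k) (n : ℕ) : Tup m k :=
  ∑ i ∈ Finset.range n, (∏ j ∈ Finset.Ico (i + 1) n, Acoef m k x j) • Zt m k x i

/-- `Ψ_i(x) = ‖x_{i+1} - x_i‖² - 1`. -/
def Psi (m k : ℕ) (i : ℕ) (x : Tup m k) : ℝ := ‖seg m k x i‖ ^ 2 - 1

/-- `e_r^{(i)}`: the tuple whose `i`-th component is the `r`-th standard basis
vector of `ℝ^{m+1}` and whose other components are `0`. -/
def et (m k : ℕ) (i : ℕ) (r : Fin (m + 1)) : Tup m k :=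
  WithLp.toLp 2 fun l => if (l : ℕ) = i then EuclideanSpace.single r (1 : ℝ) else 0

open scoped Classical

/- auxiliary -/

def SLset (m k : ℕ) (L : Finset ℕ) : Set (Tup m k) :=
  {q | q ∈ Conf m k ∧ ∀ i, 2 ≤ i → i ≤ k → (Acoef m k q (i - 1) = 0 ↔ i ∈ L)}

def Tf (m k : ℕ) (i : ℕ) (x : Tup m k) : ℝ :=
  ⟪x ((i + 1 : ℕ) : Fin (k + 1)) - x ((i : ℕ) : Fin (k + 1)),
    x ((i : ℕ) : Fin (k + 1)) - x ((i - 2 : ℕ) : Fin (k + 1))⟫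

lemma cont_Tf (m k i : ℕ) : Continuous (Tf m k i) := by
  have hc : ∀ j : Fin (k + 1), Continuous (fun x : Tup m k => x j) :=
    fun j => (continuous_apply j).comp (PiLp.continuous_ofLp 2 _)
  exact Continuous.inner ((hc _).sub (hc _)) ((hc _).sub (hc _))

lemma Tf_eq_seg (m k i : ℕ) (hi2 : 2 ≤ i) (x : Tup m k) :
    Tf m k i x = ⟪seg m k x i, seg m k x (i - 1)⟫ + ⟪seg m k x i, seg m k x (i - 2)⟫ := by
  have e1 : i - 1 + 1 = i := by omega
  have e2 : i - 2 + 1 = i - 1 := by omega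
  rw [Tf, seg, seg, seg, e1, e2, ← inner_add_right]
  congr 1
  abel

lemma exists_unit_orthogonal (m : ℕ) (hm : 2 ≤ m) (s v : Vec m) :
    ∃ u : Vec m, ‖u‖ = 1 ∧ ⟪u, s⟫ = 0 ∧ ⟪u, v⟫ = 0 := by
  classical
  set K : Submodule ℝ (Vec m) := Submodule.span ℝ {s, v} with hK
  have hfr : Module.finrank ℝ K ≤ 2 := by
    have h1 := finrank_span_le_card (R := ℝ) (M := Vec m) ({s, v} : Set (Vec m))
    refine h1.trans ?_
    have : ({s, v} : Set (Vec m)).toFinset ⊆ {s, v} := by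
      intro x hx; simpa using Set.mem_toFinset.mp hx
    calc ({s, v} : Set (Vec m)).toFinset.card ≤ ({s, v} : Finset (Vec m)).card :=
          Finset.card_le_card this
      _ ≤ 2 := Finset.card_insert_le _ _ |>.trans (by simp)
  have hKo : Kᗮ ≠ ⊥ := by
    intro hbot
    have := Submodule.finrank_add_finrank_orthogonal (K := K)
    rw [hbot] at this
    simp [finrank_euclideanSpace] at this
    omega
  obtain ⟨u0, hu0K, hu0⟩ := Submodule.exists_mem_ne_zero_of_ne_bot hKo
  have horth : ∀ x ∈ K, ⟪u0, x⟫ = 0 := (Submodule.mem_orthogonal' K u0).mp hu0K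
  have hs : ⟪u0, s⟫ = 0 := horth s (Submodule.subset_span (by simp))
  have hv : ⟪u0, v⟫ = 0 := horth v (Submodule.subset_span (by simp))
  have hn : ‖u0‖ ≠ 0 := norm_ne_zero_iff.mpr hu0
  refine ⟨‖u0‖⁻¹ • u0, ?_, ?_, ?_⟩
  · rw [norm_smul, Real.norm_eq_abs, abs_of_nonneg (by positivity),
      inv_mul_cancel₀ hn]
  · rw [real_inner_smul_left, hs, mul_zero]
  · rw [real_inner_smul_left, hv, mul_zero]


lemma real_aux (a b t r : ℝ) (ha : a ≠ 0) (ht0 : 0 < t)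
    (htbad1 : t ≠ 2*a*b/(a^2-b^2)) (hr : 0 < r) (hr2 : r^2 = 1+t^2) :
    r⁻¹ * (a + t * b) ≠ a := by
  intro h
  have h2 : a + t * b = a * r := by
    field_simp at h
    linarith
  have h3 : (a + t * b)^2 = a^2 * (1 + t^2) := by rw [h2, mul_pow, hr2]
  have h4 : t * (2*a*b + (b^2 - a^2) * t) = 0 := by nlinarith
  have h5 : 2*a*b + (b^2-a^2)*t = 0 := by
    rcases mul_eq_zero.mp h4 with h' | h'
    · exact absurd h' (ne_of_gt ht0)
    · exact h'
  have hab : a^2 ≠ b^2 := by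
    intro he
    have hb0 : (2*a)*b = 0 := by nlinarith
    rcases mul_eq_zero.mp hb0 with h' | h'
    · exact ha (by linarith)
    · rw [h'] at he
      exact ha (by nlinarith)
  apply htbad1
  have hne : a^2 - b^2 ≠ 0 := sub_ne_zero.mpr hab
  field_simp
  linarith

lemma exists_pert (m : ℕ) (hm : 2 ≤ m) (s v w : Vec m)
    (hs : ‖s‖ = 1) (hv : ‖v‖ = 1) (hvs : ⟪v, s⟫ = 0) (ha : ⟪w, v⟫ ≠ 0)
    (ε : ℝ) (hε : 0 < ε) :
    ∃ v' : Vec m, ‖v'‖ = 1 ∧ ⟪v', s⟫ = 0 ∧ ⟪w, v'⟫ ≠ 0 ∧ ⟪w, v'⟫ ≠ ⟪w, v⟫ ∧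
      ‖v' - v‖ < ε := by
  obtain ⟨u, hu, hus, huv⟩ := exists_unit_orthogonal m hm s v
  set a : ℝ := ⟪w, v⟫ with hadef
  set b : ℝ := ⟪w, u⟫ with hbdef
  have hIoo : (Set.Ioo (0:ℝ) (ε/4)).Infinite := Set.Ioo_infinite (by linarith)
  have hne : ((Set.Ioo (0:ℝ) (ε/4)) \ {2*a*b/(a^2-b^2), -a/b}).Nonempty :=
    (hIoo.diff (Set.toFinite _)).nonempty
  obtain ⟨t, ⟨ht0, htε⟩, htbad⟩ := hne
  simp only [Set.mem_insert_iff, Set.mem_singleton_iff, not_or] at htbad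
  obtain ⟨htbad1, htbad2⟩ := htbad
  set z : Vec m := v + t • u with hz
  have hvu : ⟪v, u⟫ = 0 := by rw [real_inner_comm]; exact huv
  have hz2 : ‖z‖ ^ 2 = 1 + t ^ 2 := by
    rw [← real_inner_self_eq_norm_sq, hz, real_inner_add_add_self,
      real_inner_smul_left, real_inner_smul_right, real_inner_smul_right,
      real_inner_self_eq_norm_sq, real_inner_self_eq_norm_sq, hv, hu, hvu]
    ring
  have hz1 : (1:ℝ) ≤ ‖z‖ := by nlinarith [norm_nonneg z]
  have hzpos : (0:ℝ) < ‖z‖ := by linarith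
  have hzle : ‖z‖ ≤ 1 + t := by
    calc ‖z‖ ≤ ‖v‖ + ‖t • u‖ := norm_add_le _ _
    _ = 1 + t := by rw [hv, norm_smul, hu, Real.norm_eq_abs, abs_of_pos ht0, mul_one]
  have hwz : ⟪w, z⟫ = a + t * b := by
    rw [hz, inner_add_right, real_inner_smul_right, ← hadef, ← hbdef]
  have h1 : a + t * b ≠ 0 := by
    intro h
    by_cases hb : b = 0
    · rw [hb, mul_zero, add_zero] at h; exact ha h
    · apply htbad2; field_simp; linarith
  refine ⟨‖z‖⁻¹ • z, ?_, ?_, ?_, ?_, ?_⟩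
  · rw [norm_smul, Real.norm_eq_abs, abs_of_pos (by positivity),
      inv_mul_cancel₀ (ne_of_gt hzpos)]
  · rw [real_inner_smul_left, hz, inner_add_left, real_inner_smul_left, hvs, hus]
    ring
  · rw [real_inner_smul_right, hwz]
    exact mul_ne_zero (inv_ne_zero (ne_of_gt hzpos)) h1
  · rw [real_inner_smul_right, hwz]
    exact real_aux a b t ‖z‖ ha ht0 htbad1 hzpos hz2
  · have htri : ‖‖z‖⁻¹ • z - v‖ ≤ ‖‖z‖⁻¹ • z - z‖ + ‖z - v‖ :=
      norm_sub_le_norm_sub_add_norm_sub _ _ _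
    have h1' : ‖z - v‖ = t := by
      rw [hz, add_sub_cancel_left, norm_smul, hu, Real.norm_eq_abs,
        abs_of_pos ht0, mul_one]
    have h2' : ‖‖z‖⁻¹ • z - z‖ = ‖z‖ - 1 := by
      have he : ‖z‖⁻¹ • z - z = (‖z‖⁻¹ - 1) • z := by rw [sub_smul, one_smul]
      rw [he, norm_smul, Real.norm_eq_abs,
        abs_of_nonpos (by simp only [sub_nonpos]; exact inv_le_one_of_one_le₀ hz1)]
      have : (-(‖z‖⁻¹ - 1)) * ‖z‖ = ‖z‖ - ‖z‖⁻¹ * ‖z‖ := by ring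
      rw [this, inv_mul_cancel₀ (ne_of_gt hzpos)]
    linarith

lemma perturb (m k : ℕ) (hm : 2 ≤ m) (L : Finset ℕ) (hL : ↑L ⊆ Set.Icc 2 k)
    (q : Tup m k) (hq : q ∈ SLset m k L) (i : ℕ) (hiL : i ∈ L) (hik : i + 1 ≤ k)
    (hi1 : i + 1 ∉ L) (hT : Tf m k i q = 0) (ε : ℝ) (hε : 0 < ε) :
    ∃ q' : Tup m k, q' ∈ SLset m k L ∧ Tf m k i q' ≠ 0 ∧
      (∀ j ∈ L, j + 1 ≤ k → j + 1 ∉ L → j ≠ i → Tf m k j q' = Tf m k j q) ∧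
      dist q' q < ε := by
  obtain ⟨hi2, hik'⟩ := hL hiL
  have hconf := hq.1
  have hcons := hq.2
  set s : Vec m := seg m k q (i - 2) with hsdef
  set v : Vec m := seg m k q (i - 1) with hvdef
  set w : Vec m := seg m k q i with hwdef
  have hs1 : ‖s‖ = 1 := hconf (i - 2) (by omega)
  have hv1 : ‖v‖ = 1 := hconf (i - 1) (by omega)
  have hvs : ⟪v, s⟫ = 0 := by
    have h := (hcons i hi2 hik').mpr hiL
    rw [Acoef, AA, show i - 1 - 1 = i - 2 by omega] at h
    exact h
  have ha : ⟪w, v⟫ ≠ 0 := by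
    intro h0
    apply hi1
    refine (hcons (i + 1) (by omega) hik).mp ?_
    rw [Acoef, AA, show i + 1 - 1 = i by omega, show i - 1 = i - 1 from rfl]
    exact h0
  set ε' : ℝ := ε / (2 * (k + 1)) with hε'def
  have hε' : 0 < ε' := by positivity
  obtain ⟨v', hv'1, hv's, hwv'ne, hwv'nea, hv'close⟩ :=
    exists_pert m hm s v w hs1 hv1 hvs ha ε' hε'
  set d : Vec m := v' - v with hddef
  have hdnorm : ‖d‖ < ε' := hv'close
  set q' : Tup m k := WithLp.toLp 2 (fun (l : Fin (k + 1)) => if i ≤ (l : ℕ) then q l + d else q l) with hq'def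
  have hpt : ∀ j : ℕ, j ≤ k → q' ((j : ℕ) : Fin (k + 1)) =
      q ((j : ℕ) : Fin (k + 1)) + (if i ≤ j then d else 0) := by
    intro j hj
    have hval : (((j : ℕ)) : Fin (k + 1)).val = j := Fin.val_cast_of_lt (by omega)
    show (if i ≤ (((j : ℕ)) : Fin (k + 1)).val then q _ + d else q _) = _
    rw [hval]
    split_ifs <;> simp
  have hseg : ∀ j, j < k → seg m k q' j = if j = i - 1 then v' else seg m k q j := by
    intro j hj
    rw [seg, hpt (j + 1) (by omega), hpt j (by omega)]
    by_cases hcase : j = i - 1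
    · have h1 : i ≤ j + 1 := by omega
      have h2 : ¬ i ≤ j := by omega
      rw [if_pos h1, if_neg h2, if_pos hcase]
      have : seg m k q j = v := by rw [hvdef, hcase]
      rw [show q ((↑(j+1) : Fin (k+1))) + d - (q (↑j) + 0)
          = (q (↑(j+1)) - q (↑j)) + d by abel, ← seg, this, hddef]
      abel
    · rw [if_neg hcase]
      by_cases h1 : i ≤ j
      · rw [if_pos (by omega : i ≤ j + 1), if_pos h1, seg]
        abel
      · rw [if_neg (by omega : ¬ i ≤ j + 1), if_neg h1, seg]
        abel
  have hsegi : seg m k q' i = w := by rw [hseg i (by omega), if_neg (by omega)]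
  have hsegi1 : seg m k q' (i - 1) = v' := by rw [hseg (i - 1) (by omega), if_pos rfl]
  have hsegi2 : seg m k q' (i - 2) = s := by
    rw [hseg (i - 2) (by omega), if_neg (by omega)]
  have hq'SL : q' ∈ SLset m k L := by
    constructor
    · intro j hj
      rw [hseg j hj]
      split_ifs with h
      · exact hv'1
      · exact hconf j hj
    · intro jj h2 hjk
      rw [Acoef, AA, show jj - 1 - 1 = jj - 2 by omega]
      by_cases hji : jj = i
      · rw [hji, show i - 1 = i - 1 from rfl, hsegi1, hsegi2]
        simp [hv's, hiL]
      · by_cases hji1 : jj = i + 1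
        · rw [hji1, show i + 1 - 1 = i by omega, show i + 1 - 2 = i - 1 by omega,
            hsegi, hsegi1]
          constructor
          · intro h; exact absurd h hwv'ne
          · intro h; exact absurd h hi1
        · rw [hseg (jj - 1) (by omega), hseg (jj - 2) (by omega),
            if_neg (by omega), if_neg (by omega)]
          have h := hcons jj h2 hjk
          rw [Acoef, AA, show jj - 1 - 1 = jj - 2 by omega] at h
          exact h
  have hTq : ⟪w, v⟫ + ⟪w, s⟫ = 0 := by
    rw [← Tf_eq_seg m k i hi2 q]; exact hT
  have hTi : Tf m k i q' ≠ 0 := by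
    rw [Tf_eq_seg m k i hi2 q', hsegi, hsegi1, hsegi2]
    intro h
    apply hwv'nea
    linarith
  refine ⟨q', hq'SL, hTi, ?_, ?_⟩
  · intro j hjL hjk1 hj1L hjne
    obtain ⟨hj2, _⟩ := hL hjL
    have hne1 : j + 1 ≠ i := fun h => hj1L (h ▸ hiL)
    have hne2 : j ≠ i + 1 := fun h => hi1 (h ▸ hjL)
    have hsplit : i ≤ j - 2 ∨ j + 2 ≤ i := by omega
    rw [Tf, Tf, hpt (j + 1) (by omega), hpt j (by omega), hpt (j - 2) (by omega)]
    rcases hsplit with h | h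
    · rw [if_pos (by omega), if_pos (by omega), if_pos (by omega)]
      congr 1 <;> abel
    · rw [if_neg (by omega), if_neg (by omega), if_neg (by omega)]
      congr 1 <;> abel
  · have hsub : ∀ l : Fin (k + 1), (q' - q) l = if i ≤ (l : ℕ) then d else 0 := by
      intro l
      show q' l - q l = _
      rw [hq'def]
      simp only
      split_ifs <;> abel
    have hnormsq : ‖q' - q‖ ^ 2 ≤ (k + 1) * ‖d‖ ^ 2 := by
      rw [← real_inner_self_eq_norm_sq, PiLp.inner_apply]
      calc (∑ l : Fin (k + 1), ⟪(q' - q) l, (q' - q) l⟫)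
          ≤ ∑ l : Fin (k + 1), ‖d‖ ^ 2 := by
            refine Finset.sum_le_sum fun l _ => ?_
            rw [hsub l, real_inner_self_eq_norm_sq]
            split_ifs
            · exact le_refl _
            · simp
        _ = (k + 1) * ‖d‖ ^ 2 := by
            rw [Finset.sum_const, Finset.card_univ, Fintype.card_fin, nsmul_eq_mul]
            push_cast; ring
    rw [dist_eq_norm]
    have h2' : (0:ℝ) < 2 * ((k:ℝ) + 1) := by positivity
    have hk1 : (1:ℝ) ≤ (k:ℝ) + 1 := by
      have := Nat.cast_nonneg (α := ℝ) k; linarith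
    have h1' : 2 * ((k:ℝ) + 1) * ‖d‖ < ε := by
      have hd' : ‖d‖ < ε / (2 * ((k:ℝ) + 1)) := by
        rw [hε'def] at hdnorm; exact_mod_cast hdnorm
      calc 2 * ((k:ℝ) + 1) * ‖d‖
          < 2 * ((k:ℝ) + 1) * (ε / (2 * ((k:ℝ) + 1))) :=
            mul_lt_mul_of_pos_left hd' h2'
        _ = ε := by field_simp
    have hA : (2 * ((k:ℝ) + 1) * ‖d‖) ^ 2 < ε ^ 2 :=
      pow_lt_pow_left₀ h1' (by positivity) (by norm_num)
    have hB : ((k:ℝ) + 1) * ‖d‖ ^ 2 ≤ (2 * ((k:ℝ) + 1) * ‖d‖) ^ 2 := by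
      nlinarith [mul_nonneg (sub_nonneg.mpr hk1) (sq_nonneg ‖d‖), sq_nonneg ‖d‖,
        mul_nonneg (mul_nonneg (sub_nonneg.mpr hk1) (sub_nonneg.mpr hk1)) (sq_nonneg ‖d‖)]
    have hsq : ‖q' - q‖ ^ 2 < ε ^ 2 := lt_of_le_of_lt (hnormsq.trans hB) hA
    exact lt_of_pow_lt_pow_left₀ 2 (le_of_lt hε) hsq

lemma core (m k : ℕ) (hm : 2 ≤ m) (L : Finset ℕ) (hL : ↑L ⊆ Set.Icc 2 k) :
    ∀ (n : ℕ) (q : Tup m k), q ∈ SLset m k L → ∀ ε : ℝ, 0 < ε →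
      (L.filter (fun i => i + 1 ≤ k ∧ i + 1 ∉ L ∧ Tf m k i q = 0)).card ≤ n →
      ∃ q' ∈ SLset m k L,
        (∀ i ∈ L, i + 1 ≤ k → i + 1 ∉ L → Tf m k i q' ≠ 0) ∧ dist q' q < ε := by
  intro n
  induction n with
  | zero =>
    intro q hq ε hε hcard
    refine ⟨q, hq, ?_, by simpa using hε⟩
    intro i hiL hik hi1
    intro hTi
    have : i ∈ L.filter (fun i => i + 1 ≤ k ∧ i + 1 ∉ L ∧ Tf m k i q = 0) :=
      Finset.mem_filter.mpr ⟨hiL, hik, hi1, hTi⟩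
    have := Finset.card_pos.mpr ⟨i, this⟩
    omega
  | succ n ih =>
    intro q hq ε hε hcard
    by_cases hB : (L.filter (fun i => i + 1 ≤ k ∧ i + 1 ∉ L ∧ Tf m k i q = 0)) = ∅
    · refine ⟨q, hq, ?_, by simpa using hε⟩
      intro i hiL hik hi1 hTi
      exact Finset.notMem_empty i (hB ▸ Finset.mem_filter.mpr ⟨hiL, hik, hi1, hTi⟩)
    · obtain ⟨i, hi⟩ := Finset.nonempty_iff_ne_empty.mpr hB
      obtain ⟨hiL, hik, hi1, hTi⟩ := Finset.mem_filter.mp hi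
      obtain ⟨q', hq'SL, hTi', hTother, hdist⟩ :=
        perturb m k hm L hL q hq i hiL hik hi1 hTi (ε / 2) (by linarith)
      have hsubset : (L.filter (fun j => j + 1 ≤ k ∧ j + 1 ∉ L ∧ Tf m k j q' = 0)) ⊆
          (L.filter (fun j => j + 1 ≤ k ∧ j + 1 ∉ L ∧ Tf m k j q = 0)).erase i := by
        intro j hj
        obtain ⟨hjL, hjk, hj1, hTj⟩ := Finset.mem_filter.mp hj
        have hji : j ≠ i := by
          intro h; rw [h] at hTj; exact hTi' hTj
        refine Finset.mem_erase.mpr ⟨hji, Finset.mem_filter.mpr ⟨hjL, hjk, hj1, ?_⟩⟩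
        rw [← hTother j hjL hjk hj1 hji]
        exact hTj
      have hcard' : (L.filter (fun j => j + 1 ≤ k ∧ j + 1 ∉ L ∧ Tf m k j q' = 0)).card ≤ n := by
        have h1 := Finset.card_le_card hsubset
        have h2 := Finset.card_erase_of_mem hi
        omega
      obtain ⟨q'', hq''SL, hT'', hdist''⟩ := ih q' hq'SL (ε / 2) (by linarith) hcard'
      refine ⟨q'', hq''SL, hT'', ?_⟩
      calc dist q'' q ≤ dist q'' q' + dist q' q := dist_triangle _ _ _
        _ < ε / 2 + ε / 2 := by linarith
        _ = ε := by ring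


/-- for `L ⊆ {2,…,k}`, inside
`S_L = {q ∈ C^k(m) : A_{i-1}(q) = 0 ↔ i ∈ L, for 2 ≤ i ≤ k}`, the subset of configurations
with `⟨x_{i+1} - x_i, x_i - x_{i-2}⟩ ≠ 0` for every `i ∈ L` with `i + 1 ≤ k` and `i + 1 ∉ L`
is open and dense in `S_L`. -/
theorem statement17 (m k : ℕ) (hm : 2 ≤ m) (hk : 2 ≤ k)
    (L : Finset ℕ) (hL : ↑L ⊆ Set.Icc 2 k) :
    let SL : Set (Tup m k) :=
      {q | q ∈ Conf m k ∧ ∀ i, 2 ≤ i → i ≤ k → (Acoef m k q (i - 1) = 0 ↔ i ∈ L)}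
    let U : Set ↥SL := {q | ∀ i ∈ L, i + 1 ≤ k → (i + 1) ∉ L →
      ⟪(q : Tup m k) ((i + 1 : ℕ) : Fin (k + 1)) - (q : Tup m k) ((i : ℕ) : Fin (k + 1)),
        (q : Tup m k) ((i : ℕ) : Fin (k + 1)) -
          (q : Tup m k) ((i - 2 : ℕ) : Fin (k + 1))⟫ ≠ 0}
    IsOpen U ∧ Dense U := by
  intro SL U
  have hSL : SL = SLset m k L := rfl
  set V : Set (Tup m k) :=
    {x | ∀ i ∈ L, i + 1 ≤ k → (i + 1) ∉ L → Tf m k i x ≠ 0} with hV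
  have hUV : U = Subtype.val ⁻¹' V := rfl
  constructor
  · -- openness
    rw [hUV]
    refine IsOpen.preimage continuous_subtype_val ?_
    have hVeq : V = ⋂ i ∈ L, {x | i + 1 ≤ k → (i + 1) ∉ L → Tf m k i x ≠ 0} := by
      ext x
      simp only [hV, Set.mem_setOf_eq, Set.mem_iInter]
    rw [hVeq]
    refine isOpen_biInter_finset fun i _ => ?_
    by_cases h1 : i + 1 ≤ k
    · by_cases h2 : (i + 1) ∈ L
      · have : {x : Tup m k | i + 1 ≤ k → (i + 1) ∉ L → Tf m k i x ≠ 0} = Set.univ := by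
          ext x; simp [h2]
        rw [this]; exact isOpen_univ
      · have : {x : Tup m k | i + 1 ≤ k → (i + 1) ∉ L → Tf m k i x ≠ 0}
            = (Tf m k i) ⁻¹' ({0}ᶜ) := by
          ext x; simp [h1, h2]
        rw [this]
        exact IsOpen.preimage (cont_Tf m k i) isOpen_compl_singleton
    · have : {x : Tup m k | i + 1 ≤ k → (i + 1) ∉ L → Tf m k i x ≠ 0} = Set.univ := by
        ext x; simp [h1]
      rw [this]; exact isOpen_univ
  · -- density
    rw [Metric.dense_iff]
    intro x r hr
    obtain ⟨q', hq'SL, hT', hdist⟩ :=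
      core m k hm L hL L.card x.val (hSL ▸ x.2) r hr (Finset.card_filter_le _ _)
    refine ⟨⟨q', hSL ▸ hq'SL⟩, ?_, ?_⟩
    · rw [Metric.mem_ball, Subtype.dist_eq]
      exact hdist
    · exact hT'

end ArticulatedArm
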